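/- arXiv:1903.01927 — 2 statements merged into one kernel-verified Lean document; each statement's English description precedes it below -/
import Mathlib

section
/- Let Θ = {0,1}^N and let {P_θ : θ ∈ Θ} be probability measures on a measurable space such that KL(P_θ, P_{θ'}) ≤ β < ∞ whenever the Hamming distance d_H(θ, θ') = 1. Then inf over all estimators θ̃ of max_{θ ∈ Θ} E_θ[d_H(θ, θ̃)] is at least (N/2)·max{exp(−β)/2, 1 − √(β/2)}. -/
open MeasureTheory Real Finset

/-- The Kullback–Leibler divergence `KL(μ, ν) = ∫ log(dμ/dν) dμ`. -/
noncomputable def klDivergence {α : Type*} [MeasurableSpace α] (μ ν : Measure α) : ℝ :=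
  ∫ x, MeasureTheory.llr μ ν x ∂μ

private noncomputable def hfun (x : ℝ) : ℝ := x * log x - x + 1 - 3*(x-1)^2/(2*(x+2))
private noncomputable def phi (x : ℝ) : ℝ := log x - 3*((x-1)*(x+5))/(2*(x+2)^2)

private lemma hasDerivAt_hfun {x : ℝ} (hx : 0 < x) : HasDerivAt hfun (phi x) x := by
  have h2 : x + 2 ≠ 0 := by linarith
  have h1 : HasDerivAt (fun x : ℝ => x * log x - x + 1) (log x) x := by
    have := (hasDerivAt_id x).mul (Real.hasDerivAt_log hx.ne')
    have h := (this.sub (hasDerivAt_id x)).add_const 1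
    refine h.congr_deriv ?_
    field_simp
    simp
  have h3 : HasDerivAt (fun x : ℝ => 3*(x-1)^2/(2*(x+2))) ((3/2)*((x-1)*(x+5))/((x+2)^2)) x := by
    have hnum : HasDerivAt (fun x : ℝ => 3*(x-1)^2) (3*(2*(x-1))) x := by
      have := ((hasDerivAt_id x).sub_const 1).pow 2
      have := this.const_mul (3:ℝ)
      refine this.congr_deriv ?_; norm_num [id_eq]
    have hden : HasDerivAt (fun x : ℝ => 2*(x+2)) 2 x := by
      have := ((hasDerivAt_id x).add_const 2).const_mul (2:ℝ)
      refine this.congr_deriv ?_; norm_num [id_eq]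
    have := hnum.div hden (by positivity)
    refine this.congr_deriv ?_
    field_simp
    ring
  have := h1.sub h3
  refine this.congr_deriv ?_
  unfold phi
  field_simp

private lemma hasDerivAt_phi {x : ℝ} (hx : 0 < x) : HasDerivAt phi (1/x - 27/(x+2)^3) x := by
  have h2 : (x + 2) ≠ 0 := by linarith
  have h1 := Real.hasDerivAt_log hx.ne'
  have hnum : HasDerivAt (fun x : ℝ => 3*((x-1)*(x+5))) (3*((x+5)+(x-1))) x := by
    have := (((hasDerivAt_id x).sub_const 1).mul ((hasDerivAt_id x).add_const 5)).const_mul (3:ℝ)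
    refine this.congr_deriv ?_; norm_num [id_eq]
  have hden : HasDerivAt (fun x : ℝ => 2*(x+2)^2) (2*(2*(x+2))) x := by
    have := (((hasDerivAt_id x).add_const 2).pow 2).const_mul (2:ℝ)
    refine this.congr_deriv ?_; norm_num [id_eq]
  have h3 := hnum.div hden (by positivity)
  have := h1.sub h3
  refine this.congr_deriv ?_
  field_simp
  ring

private lemma hfun_nonneg {x : ℝ} (hx : 0 ≤ x) : 0 ≤ hfun x := by
  rcases eq_or_lt_of_le hx with h0 | hx
  · simp [hfun, ← h0, Real.log_zero]; norm_num
  -- phi monotone on Ioi 0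
  have hderiv_phi_nonneg : ∀ y ∈ Set.Ioi (0:ℝ), 0 ≤ 1/y - 27/(y+2)^3 := by
    intro y hy
    simp only [Set.mem_Ioi] at hy
    rw [sub_nonneg, div_le_div_iff₀ (by positivity) (by positivity)]
    nlinarith [sq_nonneg (y-1), sq_nonneg (y+2), mul_nonneg (sq_nonneg (y-1)) (le_of_lt hy)]
  have hphi_cont : ContinuousOn phi (Set.Ioi 0) := fun y hy =>
    ((hasDerivAt_phi hy).continuousAt).continuousWithinAt
  have hphi_mono : MonotoneOn phi (Set.Ioi 0) := by
    apply monotoneOn_of_deriv_nonneg (convex_Ioi 0) hphi_cont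
    · intro y hy
      rw [interior_Ioi] at hy
      exact ((hasDerivAt_phi hy).differentiableAt).differentiableWithinAt
    · intro y hy
      rw [interior_Ioi] at hy
      rw [(hasDerivAt_phi hy).deriv]
      exact hderiv_phi_nonneg y hy
  have hphi1 : phi 1 = 0 := by simp [phi]
  have hh_cont : ContinuousOn hfun (Set.Ioi 0) := fun y hy =>
    ((hasDerivAt_hfun hy).continuousAt).continuousWithinAt
  have hh1 : hfun 1 = 0 := by simp [hfun]
  rcases le_or_gt 1 x with h1 | h1
  · have hmono : MonotoneOn hfun (Set.Ici 1) := by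
      apply monotoneOn_of_deriv_nonneg (convex_Ici 1)
        (hh_cont.mono (fun y hy => Set.mem_Ioi.2 (lt_of_lt_of_le one_pos (Set.mem_Ici.1 hy))))
      · intro y hy
        rw [interior_Ici] at hy
        exact ((hasDerivAt_hfun (lt_trans one_pos hy)).differentiableAt).differentiableWithinAt
      · intro y hy
        rw [interior_Ici] at hy
        rw [(hasDerivAt_hfun (lt_trans one_pos hy)).deriv]
        rw [← hphi1]
        exact hphi_mono (Set.mem_Ioi.2 one_pos) (Set.mem_Ioi.2 (lt_trans one_pos hy)) hy.le
    have := hmono (Set.mem_Ici.2 le_rfl) (Set.mem_Ici.2 h1) h1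
    rw [hh1] at this; exact this
  · have hanti : AntitoneOn hfun (Set.Ioc 0 1) := by
      apply antitoneOn_of_deriv_nonpos (convex_Ioc 0 1)
        (hh_cont.mono (fun y hy => hy.1))
      · intro y hy
        rw [interior_Ioc] at hy
        exact ((hasDerivAt_hfun hy.1).differentiableAt).differentiableWithinAt
      · intro y hy
        rw [interior_Ioc] at hy
        rw [(hasDerivAt_hfun hy.1).deriv]
        rw [← hphi1]
        exact hphi_mono (Set.mem_Ioi.2 hy.1) (Set.mem_Ioi.2 one_pos) hy.2.le
    have := hanti (Set.mem_Ioc.2 ⟨hx, h1.le⟩) (Set.mem_Ioc.2 ⟨one_pos, le_rfl⟩) h1.le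
    rw [hh1] at this; exact this

lemma pinsker_pointwise {x : ℝ} (hx : 0 ≤ x) :
    3*(x-1)^2/(2*(x+2)) ≤ x * log x - x + 1 := by
  have := hfun_nonneg hx
  unfold hfun at this
  linarith

-- elementary Cauchy-Schwarz for integrals
lemma my_cauchy_schwarz {α : Type*} [MeasurableSpace α] (μ : Measure α)
    (u v : α → ℝ) (hu : ∀ x, 0 ≤ u x) (hv : ∀ x, 0 ≤ v x)
    (hu2 : Integrable (fun x => u x ^ 2) μ) (hv2 : Integrable (fun x => v x ^ 2) μ)
    (huv : Integrable (fun x => u x * v x) μ)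
    (hvpos : 0 < ∫ x, v x ^ 2 ∂μ) :
    (∫ x, u x * v x ∂μ) ^ 2 ≤ (∫ x, u x ^ 2 ∂μ) * (∫ x, v x ^ 2 ∂μ) := by
  set A := ∫ x, u x ^ 2 ∂μ
  set B := ∫ x, u x * v x ∂μ
  set C := ∫ x, v x ^ 2 ∂μ
  set t := B / C with ht
  have hexp : ∀ x, (u x - t * v x) ^ 2 = u x ^ 2 - (2*t) * (u x * v x) + t^2 * v x ^ 2 := by
    intro x; ring
  have hint : Integrable (fun x => (u x - t * v x) ^ 2) μ := by
    simp_rw [hexp]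
    exact ((hu2.sub (huv.const_mul (2*t))).add (hv2.const_mul (t^2)))
  have h0 : 0 ≤ ∫ x, (u x - t * v x) ^ 2 ∂μ := integral_nonneg fun x => sq_nonneg _
  have heq : ∫ x, (u x - t * v x) ^ 2 ∂μ = A - (2*t)*B + t^2*C := by
    simp_rw [hexp]
    have e1 : Integrable (fun x => u x ^ 2 - 2 * t * (u x * v x)) μ := hu2.sub (huv.const_mul (2*t))
    rw [integral_add e1 (hv2.const_mul (t^2)), integral_sub hu2 (huv.const_mul (2*t)),
      integral_const_mul, integral_const_mul]
  rw [heq, ht] at h0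
  have : 0 ≤ A - B^2/C := by
    have h1 : B/C*B = B^2/C := by ring
    have h2 : (B/C)^2*C = B^2/C := by
      field_simp
    nlinarith [h0]
  have := (div_le_iff₀ hvpos).mp (by linarith : B^2/C ≤ A)
  linarith

lemma key_bound {α : Type*} [MeasurableSpace α] (P Q : Measure α)
    [IsProbabilityMeasure P] [IsProbabilityMeasure Q]
    (hac : P ≪ Q) (hint : Integrable (llr P Q) P) {β : ℝ} (hβ : 0 ≤ β)
    (hKL : ∫ x, llr P Q x ∂P ≤ β) {A : Set α} (hA : MeasurableSet A) :
    max (exp (-β)/2) (1 - Real.sqrt (β/2)) ≤ (P A).toReal + (Q Aᶜ).toReal := by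
  set g : α → ℝ := fun x => (P.rnDeriv Q x).toReal with hg
  have hgmeas : Measurable g := (Measure.measurable_rnDeriv P Q).ennreal_toReal
  have hg0 : ∀ x, 0 ≤ g x := fun x => ENNReal.toReal_nonneg
  have hgint : Integrable g Q := Measure.integrable_toReal_rnDeriv
  have hg1 : ∫ x, g x ∂Q = 1 := by
    rw [hg, Measure.integral_toReal_rnDeriv hac]
    simp
  have hsetP : ∀ s : Set α, MeasurableSet s → ∫ x in s, g x ∂Q = (P s).toReal := fun s hs =>
    Measure.setIntegral_toReal_rnDeriv hac s
  -- KL transfer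
  have hllr : ∀ x, llr P Q x = log (g x) := fun x => rfl
  have hKLeq : ∫ x, g x * log (g x) ∂Q = ∫ x, llr P Q x ∂P := by
    have := integral_rnDeriv_smul hac (f := llr P Q)
    simpa [smul_eq_mul, llr_def] using this
  have hglogint : Integrable (fun x => g x * log (g x)) Q := by
    have := (integrable_rnDeriv_smul_iff hac (f := llr P Q)).mpr hint
    simpa [smul_eq_mul, llr_def] using this
  set KL := ∫ x, llr P Q x ∂P with hKLdef
  have hsubint : Integrable (fun x => g x * log (g x) - g x) Q := hglogint.sub hgint
  have hKLint : ∫ x, (g x * log (g x) - g x + 1) ∂Q = KL := by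
    rw [integral_add hsubint (integrable_const 1),
      integral_sub hglogint hgint, hg1, hKLeq]
    simp
  have hKLnonneg : 0 ≤ KL := by
    rw [← hKLint]
    have h01 : ∀ x, 0 ≤ g x * log (g x) - g x + 1 := by
      intro x
      have := pinsker_pointwise (hg0 x)
      have h2 : 0 ≤ 3*(g x-1)^2/(2*(g x+2)) := by positivity
      linarith
    exact integral_nonneg h01
  have habs_int : Integrable (fun x => |g x - 1|) Q := (hgint.sub (integrable_const 1)).abs
  -- ## Pinsker bound
  have hPinsker : 1 - Real.sqrt (β/2) ≤ (P A).toReal + (Q Aᶜ).toReal := by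
    set u : α → ℝ := fun x => |g x - 1| / Real.sqrt (g x + 2) with hu
    set v : α → ℝ := fun x => Real.sqrt (g x + 2) with hv
    have hgx2 : ∀ x, (0:ℝ) < g x + 2 := fun x => by have := hg0 x; linarith
    have hv2 : ∀ x, v x ^ 2 = g x + 2 := fun x => Real.sq_sqrt (hgx2 x).le
    have huv : ∀ x, u x * v x = |g x - 1| := by
      intro x
      have hne : Real.sqrt (g x + 2) ≠ 0 := by positivity
      simp only [hu, hv]
      field_simp
    have hu2 : ∀ x, u x ^ 2 = (g x - 1)^2 / (g x + 2) := by
      intro x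
      simp only [hu]
      rw [div_pow, Real.sq_sqrt (hgx2 x).le, sq_abs]
    have habsle : ∀ x, |g x - 1| ≤ g x + 2 :=
      fun x => abs_le.mpr ⟨by have := hg0 x; linarith, by linarith⟩
    have hu2le : ∀ x, u x ^ 2 ≤ |g x - 1| := by
      intro x
      rw [hu2, div_le_iff₀ (hgx2 x), ← sq_abs, sq]
      exact mul_le_mul_of_nonneg_left (habsle x) (abs_nonneg _)
    have humeas : Measurable u := (hgmeas.sub measurable_const).abs.div
      ((hgmeas.add measurable_const).sqrt)
    have hvmeas : Measurable v := (hgmeas.add measurable_const).sqrt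
    have hu2int : Integrable (fun x => u x ^ 2) Q := by
      refine Integrable.mono' habs_int (humeas.pow_const 2).aestronglyMeasurable ?_
      filter_upwards with x
      rw [Real.norm_eq_abs, abs_of_nonneg (sq_nonneg _)]
      exact hu2le x
    have hv2int : Integrable (fun x => v x ^ 2) Q := by
      have : (fun x => v x ^ 2) = fun x => g x + 2 := funext hv2
      rw [this]
      exact hgint.add (integrable_const 2)
    have huvint : Integrable (fun x => u x * v x) Q := by
      have : (fun x => u x * v x) = fun x => |g x - 1| := funext huv
      rw [this]; exact habs_int
    have hintv2 : ∫ x, v x ^ 2 ∂Q = 3 := by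
      have : (fun x => v x ^ 2) = fun x => g x + 2 := funext hv2
      rw [this, integral_add hgint (integrable_const 2), hg1, integral_const]
      simp
      norm_num
    have hCS := my_cauchy_schwarz Q u v (fun x => by positivity)
      (fun x => Real.sqrt_nonneg _) hu2int hv2int huvint (by rw [hintv2]; norm_num)
    rw [hintv2] at hCS
    have huvint_eq : ∫ x, u x * v x ∂Q = ∫ x, |g x - 1| ∂Q := by
      congr 1; exact funext huv
    -- bound ∫ u² by (2/3) KL
    have hfrac : ∫ x, u x ^ 2 ∂Q ≤ (2/3) * KL := by
      have hmono : ∀ x, u x ^ 2 ≤ (2/3) * (g x * log (g x) - g x + 1) := by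
        intro x
        have := pinsker_pointwise (hg0 x)
        rw [hu2]
        have h3 : (g x - 1)^2/(g x + 2) = (2/3) * (3*(g x-1)^2/(2*(g x+2))) := by
          field_simp
        rw [h3]
        linarith
      have hint2 : Integrable (fun x => (2/3) * (g x * log (g x) - g x + 1)) Q :=
        (hsubint.add (integrable_const 1)).const_mul _
      calc ∫ x, u x ^ 2 ∂Q ≤ ∫ x, (2/3) * (g x * log (g x) - g x + 1) ∂Q :=
            integral_mono hu2int hint2 hmono
        _ = (2/3) * KL := by
            rw [integral_const_mul, hKLint]
    have habs_le : ∫ x, |g x - 1| ∂Q ≤ Real.sqrt (2*β) := by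
      have hnn : 0 ≤ ∫ x, |g x - 1| ∂Q := integral_nonneg fun x => abs_nonneg _
      rw [show Real.sqrt (2*β) = Real.sqrt (2*β) from rfl]
      rw [← Real.sqrt_sq hnn]
      apply Real.sqrt_le_sqrt
      rw [← huvint_eq]
      calc (∫ x, u x * v x ∂Q)^2 ≤ (∫ x, u x ^ 2 ∂Q) * 3 := hCS
        _ ≤ (2/3)*KL*3 := by
            apply mul_le_mul_of_nonneg_right hfrac (by norm_num)
        _ = 2*KL := by ring
        _ ≤ 2*β := by linarith
    -- TV bound
    have hgm1int : Integrable (fun x => g x - 1) Q := hgint.sub (integrable_const 1)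
    set D := ∫ x in A, (g x - 1) ∂Q with hD
    have hsplit : D + ∫ x in Aᶜ, (g x - 1) ∂Q = 0 := by
      rw [hD, integral_add_compl hA hgm1int, integral_sub hgint (integrable_const 1), hg1]
      simp
    have hD1 : |D| ≤ ∫ x in A, |g x - 1| ∂Q := by
      calc |D| = ‖D‖ := rfl
        _ ≤ ∫ x in A, ‖g x - 1‖ ∂Q := norm_integral_le_integral_norm _
        _ = ∫ x in A, |g x - 1| ∂Q := rfl
    have hD2 : |D| ≤ ∫ x in Aᶜ, |g x - 1| ∂Q := by
      have : |D| = ‖∫ x in Aᶜ, (g x - 1) ∂Q‖ := by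
        rw [show ∫ x in Aᶜ, (g x - 1) ∂Q = -D from by linarith]
        simp [abs_neg]
      rw [this]
      exact norm_integral_le_integral_norm _
    have hDabs : |D| ≤ Real.sqrt (β/2) := by
      have hsum : 2 * |D| ≤ ∫ x, |g x - 1| ∂Q := by
        rw [← integral_add_compl hA habs_int]
        linarith
      have h4 : Real.sqrt (2*β) = 2 * Real.sqrt (β/2) := by
        rw [show (2:ℝ)*β = 4*(β/2) by ring, show (4:ℝ) = 2^2 by norm_num,
          Real.sqrt_mul (by positivity), Real.sqrt_sq (by norm_num)]
      linarith [habs_le]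
    -- assemble
    have hPA : (P A).toReal = ∫ x in A, g x ∂Q := (hsetP A hA).symm
    have hQA : (Q A).toReal + (Q Aᶜ).toReal = 1 := by
      have := measure_add_measure_compl (μ := Q) hA
      have h2 : (Q A).toReal + (Q Aᶜ).toReal = (Q A + Q Aᶜ).toReal := by
        rw [ENNReal.toReal_add (measure_ne_top _ _) (measure_ne_top _ _)]
      rw [h2, this]
      simp
    have hdiff : (P A).toReal - (Q A).toReal = D := by
      rw [hPA, hD]
      rw [integral_sub (hgint.integrableOn) (integrableOn_const (measure_ne_top _ _))]
      simp [setIntegral_const]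
      rfl
    have := abs_le.mp hDabs
    linarith
  -- ## Bretagnolle-Huber bound
  have hBH : exp (-β)/2 ≤ (P A).toReal + (Q Aᶜ).toReal := by
    set m : α → ℝ := fun x => min (g x) 1 with hm
    set M : α → ℝ := fun x => max (g x) 1 with hM
    have hm0 : ∀ x, 0 ≤ m x := fun x => le_min (hg0 x) zero_le_one
    have hM0 : ∀ x, 0 ≤ M x := fun x => le_trans zero_le_one (le_max_right _ _)
    have hmM : ∀ x, m x * M x = g x := fun x => by
      rw [hm, hM]; rw [min_mul_max]; ring
    have hgp1 : Integrable (fun x => g x + 1) Q := hgint.add (integrable_const 1)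
    have hmmeas : Measurable m := hgmeas.min measurable_const
    have hMmeas : Measurable M := hgmeas.max measurable_const
    have hmint : Integrable m Q := by
      refine Integrable.mono' (integrable_const 1) hmmeas.aestronglyMeasurable ?_
      filter_upwards with x
      rw [Real.norm_eq_abs, abs_of_nonneg (hm0 x)]
      exact min_le_right _ _
    have hMint : Integrable M Q := by
      refine Integrable.mono' hgp1 hMmeas.aestronglyMeasurable ?_
      filter_upwards with x
      rw [Real.norm_eq_abs, abs_of_nonneg (hM0 x)]
      exact max_le (by linarith [hg0 x]) (by linarith [hg0 x])
    have hsqrt_le : ∀ x, Real.sqrt (g x) ≤ (g x + 1)/2 := by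
      intro x
      nlinarith [sq_nonneg (Real.sqrt (g x) - 1), Real.sq_sqrt (hg0 x), Real.sqrt_nonneg (g x)]
    have hsqrtint : Integrable (fun x => Real.sqrt (g x)) Q := by
      refine Integrable.mono' (hgp1.div_const 2)
        hgmeas.sqrt.aestronglyMeasurable ?_
      filter_upwards with x
      rw [Real.norm_eq_abs, abs_of_nonneg (Real.sqrt_nonneg _)]
      exact hsqrt_le x
    -- Cauchy-Schwarz with sqrt m, sqrt M
    set u : α → ℝ := fun x => Real.sqrt (m x) with hu
    set v : α → ℝ := fun x => Real.sqrt (M x) with hv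
    have hu2 : ∀ x, u x ^ 2 = m x := fun x => Real.sq_sqrt (hm0 x)
    have hv2 : ∀ x, v x ^ 2 = M x := fun x => Real.sq_sqrt (hM0 x)
    have huv : ∀ x, u x * v x = Real.sqrt (g x) := fun x => by
      rw [hu, hv, ← Real.sqrt_mul (hm0 x), hmM]
    have hu2int : Integrable (fun x => u x ^ 2) Q := by
      have : (fun x => u x ^ 2) = m := funext hu2
      rw [this]; exact hmint
    have hv2int : Integrable (fun x => v x ^ 2) Q := by
      have : (fun x => v x ^ 2) = M := funext hv2
      rw [this]; exact hMint
    have huvint : Integrable (fun x => u x * v x) Q := by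
      have : (fun x => u x * v x) = fun x => Real.sqrt (g x) := funext huv
      rw [this]; exact hsqrtint
    have hintv2M : ∫ x, v x ^ 2 ∂Q = ∫ x, M x ∂Q := by
      congr 1; exact funext hv2
    have hintu2m : ∫ x, u x ^ 2 ∂Q = ∫ x, m x ∂Q := by
      congr 1; exact funext hu2
    have hMone : (1:ℝ) ≤ ∫ x, M x ∂Q := by
      have := integral_mono (integrable_const (1:ℝ)) hMint (fun x => le_max_right _ _)
      simpa using this
    have hMtwo : ∫ x, M x ∂Q ≤ 2 := by
      have := integral_mono hMint hgp1
        (fun x => max_le (by linarith [hg0 x]) (by linarith [hg0 x]))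
      rw [integral_add hgint (integrable_const 1), hg1] at this
      simp at this
      linarith
    have hCS := my_cauchy_schwarz Q u v (fun x => Real.sqrt_nonneg _)
      (fun x => Real.sqrt_nonneg _) hu2int hv2int huvint
      (by rw [hintv2M]; linarith)
    rw [hintv2M, hintu2m] at hCS
    have huvint_eq : ∫ x, u x * v x ∂Q = ∫ x, Real.sqrt (g x) ∂Q := by
      congr 1; exact funext huv
    rw [huvint_eq] at hCS
    -- Jensen
    have hptwise : ∀ x, g x * exp (-(1/2) * log (g x)) = Real.sqrt (g x) := by
      intro x
      rcases eq_or_lt_of_le (hg0 x) with h0 | h0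
      · rw [← h0]; simp
      · rw [Real.sqrt_eq_rpow]
        have h1 : exp (-(1/2) * log (g x)) = g x ^ (-(1/2) : ℝ) := by
          rw [Real.rpow_def_of_pos h0]; ring_nf
        rw [h1]
        nth_rewrite 1 [← Real.rpow_one (g x)]
        rw [← Real.rpow_add h0]
        norm_num
    have htransfer : ∫ x, Real.sqrt (g x) ∂Q = ∫ x, exp (-(1/2) * llr P Q x) ∂P := by
      rw [← integral_rnDeriv_smul hac (f := fun x => exp (-(1/2) * llr P Q x))]
      congr 1
      funext x
      rw [smul_eq_mul, llr_def]
      exact (hptwise x).symm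
    have hexp_int : Integrable (fun x => exp (-(1/2) * llr P Q x)) P := by
      refine (integrable_rnDeriv_smul_iff hac).mp ?_
      have : (fun x => (P.rnDeriv Q x).toReal • exp (-(1/2) * llr P Q x))
          = fun x => Real.sqrt (g x) := by
        funext x
        rw [smul_eq_mul, llr_def]
        exact hptwise x
      rw [this]
      exact hsqrtint
    have hjensen : exp (∫ x, -(1/2) * llr P Q x ∂P) ≤ ∫ x, exp (-(1/2) * llr P Q x) ∂P := by
      have := convexOn_exp.map_integral_le continuous_exp.continuousOn isClosed_univ
        (Filter.Eventually.of_forall fun x => Set.mem_univ _)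
        (hint.const_mul (-(1/2))) (by simpa [Function.comp_def] using hexp_int)
      simpa using this
    have hintllr : ∫ x, -(1/2) * llr P Q x ∂P = -(1/2) * KL := by
      rw [integral_const_mul, hKLdef]
    have hsqrtg_lb : exp (-β/2) ≤ ∫ x, Real.sqrt (g x) ∂Q := by
      rw [htransfer]
      refine le_trans ?_ hjensen
      rw [hintllr]
      apply Real.exp_le_exp.mpr
      linarith
    have hsqrtg_nonneg : (0:ℝ) ≤ ∫ x, Real.sqrt (g x) ∂Q :=
      integral_nonneg fun x => Real.sqrt_nonneg _
    have hmnonneg : (0:ℝ) ≤ ∫ x, m x ∂Q := integral_nonneg hm0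
    have hmlb : exp (-β)/2 ≤ ∫ x, m x ∂Q := by
      have hsq : exp (-β) ≤ (∫ x, Real.sqrt (g x) ∂Q)^2 := by
        have := pow_le_pow_left₀ (Real.exp_nonneg _) hsqrtg_lb 2
        rw [← Real.exp_nat_mul] at this
        refine le_trans (le_of_eq ?_) this
        congr 1
        push_cast
        ring
      have h2 : (∫ x, m x ∂Q) * (∫ x, M x ∂Q) ≤ (∫ x, m x ∂Q) * 2 :=
        mul_le_mul_of_nonneg_left hMtwo hmnonneg
      nlinarith [hCS]
    -- set decomposition
    have h1 : ∫ x in A, m x ∂Q ≤ (P A).toReal := by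
      rw [← hsetP A hA]
      exact setIntegral_mono_on hmint.integrableOn hgint.integrableOn hA
        (fun x _ => min_le_left _ _)
    have h2 : ∫ x in Aᶜ, m x ∂Q ≤ (Q Aᶜ).toReal := by
      have hle : ∫ x in Aᶜ, m x ∂Q ≤ ∫ x in Aᶜ, (1:ℝ) ∂Q :=
        setIntegral_mono_on hmint.integrableOn
          (integrableOn_const (measure_ne_top _ _)) hA.compl
          (fun x _ => min_le_right _ _)
      rw [setIntegral_const] at hle
      exact (by simpa using hle : _ ≤ Q.real Aᶜ)
    have hsplit : ∫ x in A, m x ∂Q + ∫ x in Aᶜ, m x ∂Q = ∫ x, m x ∂Q :=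
      integral_add_compl hA hmint
    linarith
  exact max_le hBH hPinsker

/-- Kullback–Leibler version of Assouad's lemma: if `KL(P_θ, P_{θ'}) ≤ β` whenever the
Hamming distance of `θ, θ'` is `1`, then any estimator `θ̃` has
`max_θ E_θ[d_H(θ, θ̃)] ≥ (N/2)·max(e^{-β}/2, 1 - √(β/2))`. -/
theorem assouad_kl
    {𝒳 : Type*} [MeasurableSpace 𝒳] (N : ℕ) (hN : 1 ≤ N)
    (P : (Fin N → Bool) → Measure 𝒳)
    (hP : ∀ θ, IsProbabilityMeasure (P θ))
    (β : ℝ) (hβ : 0 ≤ β)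
    (hKL : ∀ θ θ' : Fin N → Bool,
      (Finset.univ.filter (fun i => θ i ≠ θ' i)).card = 1 →
      (P θ ≪ P θ') ∧ Integrable (MeasureTheory.llr (P θ) (P θ')) (P θ) ∧
        klDivergence (P θ) (P θ') ≤ β)
    (est : 𝒳 → (Fin N → Bool)) (hest : Measurable est) :
    ∃ θ : Fin N → Bool,
      (N / 2 : ℝ) * max (Real.exp (-β) / 2) (1 - Real.sqrt (β / 2))
        ≤ ∫ x, ((Finset.univ.filter (fun i => θ i ≠ est x i)).card : ℝ) ∂(P θ) := by
  haveI := hP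
  set c : ℝ := max (Real.exp (-β) / 2) (1 - Real.sqrt (β / 2)) with hc
  set A : (Fin N → Bool) → Fin N → Set 𝒳 := fun θ i => {x | θ i ≠ est x i} with hA
  have hAmeas : ∀ θ i, MeasurableSet (A θ i) := by
    intro θ i
    have h1 : Measurable fun x => est x i := (measurable_pi_apply i).comp hest
    have : A θ i = ((fun x => est x i) ⁻¹' {θ i})ᶜ := by
      ext x
      simp only [hA, Set.mem_setOf_eq, Set.mem_compl_iff, Set.mem_preimage,
        Set.mem_singleton_iff]
      exact ne_comm
    rw [this]
    exact (h1 (measurableSet_singleton (θ i))).compl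
  set t : (Fin N → Bool) → Fin N → ℝ := fun θ i => ((P θ) (A θ i)).toReal with ht
  -- value of the integral
  have hSθ : ∀ θ, ∫ x, ((Finset.univ.filter (fun i => θ i ≠ est x i)).card : ℝ) ∂(P θ)
      = ∑ i, t θ i := by
    intro θ
    have hrep : ∀ x, ((Finset.univ.filter (fun i => θ i ≠ est x i)).card : ℝ)
        = ∑ i : Fin N, (A θ i).indicator (fun _ => (1:ℝ)) x := by
      intro x
      rw [Finset.card_filter]
      push_cast
      congr 1
      funext i
      simp [Set.indicator_apply, hA]
    simp_rw [hrep]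
    rw [integral_finset_sum _ (fun i _ => (integrable_const (1:ℝ)).indicator (hAmeas θ i))]
    congr 1
    funext i
    rw [integral_indicator_const _ (hAmeas θ i)]
    simp [ht]
    rfl
  -- the flip involution
  set σ : Fin N → (Fin N → Bool) → (Fin N → Bool) :=
    fun i θ => Function.update θ i (!(θ i)) with hσ
  have hσinv : ∀ i, Function.Involutive (σ i) := by
    intro i θ
    funext j
    rcases eq_or_ne j i with rfl | h
    · simp [hσ, Function.update_apply]
    · simp [hσ, Function.update_apply, h]
  have hham : ∀ i θ, (Finset.univ.filter (fun j => θ j ≠ σ i θ j)).card = 1 := by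
    intro i θ
    have : (Finset.univ.filter (fun j => θ j ≠ σ i θ j)) = {i} := by
      ext j
      simp only [mem_filter, mem_univ, true_and, mem_singleton]
      rcases eq_or_ne j i with rfl | h
      · simp [hσ]
      · simp [hσ, Function.update_apply, h]
    rw [this]
    rfl
  have hAcompl : ∀ i θ, A (σ i θ) i = (A θ i)ᶜ := by
    intro i θ
    ext x
    simp only [hA, Set.mem_setOf_eq, Set.mem_compl_iff, hσ, Function.update_self]
    cases hb : θ i <;> cases hb2 : est x i <;> simp
  -- pair bound
  have hpair : ∀ i θ, c ≤ t θ i + t (σ i θ) i := by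
    intro i θ
    obtain ⟨hac, hint, hkl⟩ := hKL θ (σ i θ) (hham i θ)
    have := key_bound (P θ) (P (σ i θ)) hac hint hβ hkl (hAmeas θ i)
    rw [ht]
    simp only
    rw [hAcompl i θ]
    exact this
  -- sum bound for fixed i
  have hsum_i : ∀ i, ((Finset.univ : Finset (Fin N → Bool)).card : ℝ) * c / 2
      ≤ ∑ θ, t θ i := by
    intro i
    have hswap : ∑ θ, t (σ i θ) i = ∑ θ, t θ i :=
      Fintype.sum_bijective (σ i) (hσinv i).bijective _ _ (fun θ => rfl)
    have h2 : ∑ _θ : Fin N → Bool, c ≤ ∑ θ, (t θ i + t (σ i θ) i) :=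
      Finset.sum_le_sum fun θ _ => hpair i θ
    rw [Finset.sum_add_distrib, hswap, Finset.sum_const, nsmul_eq_mul] at h2
    linarith
  -- total
  have htotal : ((Finset.univ : Finset (Fin N → Bool)).card : ℝ) * ((N/2 : ℝ) * c)
      ≤ ∑ θ, ∑ i, t θ i := by
    rw [Finset.sum_comm]
    calc ((Finset.univ : Finset (Fin N → Bool)).card : ℝ) * ((N/2 : ℝ) * c)
        = ∑ _i : Fin N, ((Finset.univ : Finset (Fin N → Bool)).card : ℝ) * c / 2 := by
          rw [Finset.sum_const, nsmul_eq_mul]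
          simp [Finset.card_univ]
          ring
      _ ≤ ∑ i, ∑ θ, t θ i := Finset.sum_le_sum fun i _ => hsum_i i
  have hsum_const : ∑ _θ : Fin N → Bool, ((N/2 : ℝ) * c)
      = ((Finset.univ : Finset (Fin N → Bool)).card : ℝ) * ((N/2 : ℝ) * c) := by
    rw [Finset.sum_const, nsmul_eq_mul]
  obtain ⟨θ, _, hθ⟩ := Finset.exists_le_of_sum_le (Finset.univ_nonempty)
    (f := fun _ => (N/2 : ℝ) * c) (g := fun θ => ∑ i, t θ i)
    (by rw [hsum_const]; exact htotal)
  exact ⟨θ, by rw [hSθ θ]; exact hθ⟩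
end

section
/- Let Q be an α-differentially private channel (Markov kernel) from X to Z, i.e. Q(A|x) ≤ e^α Q(A|x') for all measurable A and all x, x'. For probability measures P_ν, P_{ν'} on X, let M_ν = ∫ Q(·|x) dP_ν(x) and M_{ν'} = ∫ Q(·|x) dP_{ν'}(x) be the marginal distributions of the private data. Then the total variation distance satisfies TV(M_ν, M_{ν'}) ≤ (e^α − 1) · TV(P_ν, P_{ν'}). -/
open MeasureTheory Real ENNReal

/-- Total variation distance between two measures: `sup_A |μ(A) - ν(A)|`. -/
noncomputable def tvDist {X : Type*} [MeasurableSpace X] (μ ν : Measure X) : ℝ :=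
  ⨆ A : {A : Set X // MeasurableSet A}, |(μ A).toReal - (ν A).toReal|

lemma tvDist_bddAbove {X : Type*} [MeasurableSpace X] (μ ν : Measure X)
    [IsProbabilityMeasure μ] [IsProbabilityMeasure ν] :
    BddAbove (Set.range fun A : {A : Set X // MeasurableSet A} =>
      |(μ A).toReal - (ν A).toReal|) := by
  refine ⟨1, ?_⟩
  rintro r ⟨A, rfl⟩
  have h1 : (μ (A : Set X)).toReal ≤ 1 := by
    have := prob_le_one (μ := μ) (s := A)
    simpa using ENNReal.toReal_le_of_le_ofReal zero_le_one (by simpa)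
  have h2 : (ν (A : Set X)).toReal ≤ 1 := by
    have := prob_le_one (μ := ν) (s := A)
    simpa using ENNReal.toReal_le_of_le_ofReal zero_le_one (by simpa)
  have h3 : 0 ≤ (μ (A : Set X)).toReal := ENNReal.toReal_nonneg
  have h4 : 0 ≤ (ν (A : Set X)).toReal := ENNReal.toReal_nonneg
  rw [abs_le]; constructor <;> linarith

lemma tvDist_nonneg {X : Type*} [MeasurableSpace X] (μ ν : Measure X)
    [IsProbabilityMeasure μ] [IsProbabilityMeasure ν] : 0 ≤ tvDist μ ν := by
  have := le_ciSup (tvDist_bddAbove μ ν) ⟨∅, MeasurableSet.empty⟩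
  exact le_trans (abs_nonneg _) this

/-- Key lemma: integral difference against a `[0, M]`-valued function is bounded by
`M` times total variation. -/
lemma integral_sub_le_tvDist {X : Type*} [MeasurableSpace X] (μ ν : Measure X)
    [IsProbabilityMeasure μ] [IsProbabilityMeasure ν]
    (g : X → ℝ) (hg : Measurable g) (M : ℝ) (h0 : ∀ x, 0 ≤ g x) (h1 : ∀ x, g x ≤ M) :
    ∫ x, g x ∂μ - ∫ x, g x ∂ν ≤ M * tvDist μ ν := by
  set ρ : Measure X := μ + ν with hρ
  have hμρ : μ ≪ ρ := (Measure.le_add_right le_rfl).absolutelyContinuous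
  have hνρ : ν ≪ ρ := (Measure.le_add_left le_rfl).absolutelyContinuous
  set h : X → ℝ≥0∞ := μ.rnDeriv ρ with hh
  set h' : X → ℝ≥0∞ := ν.rnDeriv ρ with hh'
  set A : Set X := {x | h' x ≤ h x} with hA
  have hAm : MeasurableSet A :=
    measurableSet_le (Measure.measurable_rnDeriv ν ρ) (Measure.measurable_rnDeriv μ ρ)
  have hX : Nonempty X := by
    by_contra hX
    rw [not_nonempty_iff] at hX
    have h1 := measure_univ (μ := μ)
    rw [Set.univ_eq_empty_iff.mpr hX, measure_empty] at h1
    exact zero_ne_one h1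
  have hMnn : 0 ≤ M := le_trans (h0 Classical.ofNonempty) (h1 Classical.ofNonempty)
  -- integrability facts
  have hhi : Integrable (fun x => (h x).toReal) ρ := Measure.integrable_toReal_rnDeriv
  have hh'i : Integrable (fun x => (h' x).toReal) ρ := Measure.integrable_toReal_rnDeriv
  have hgh : Integrable (fun x => (h x).toReal • g x) ρ := by
    refine Integrable.mono (hhi.const_mul M) ?_ ?_
    · exact ((Measure.measurable_rnDeriv μ ρ).ennreal_toReal.smul hg).aestronglyMeasurable
    · refine Filter.Eventually.of_forall fun x => ?_
      simp only [smul_eq_mul, norm_mul, Real.norm_eq_abs]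
      rw [abs_of_nonneg hMnn, abs_of_nonneg (ENNReal.toReal_nonneg (a := h x)),
        abs_of_nonneg (h0 x)]
      calc (h x).toReal * g x ≤ (h x).toReal * M :=
            mul_le_mul_of_nonneg_left (h1 x) ENNReal.toReal_nonneg
        _ = M * (h x).toReal := mul_comm _ _
  have hgh' : Integrable (fun x => (h' x).toReal • g x) ρ := by
    refine Integrable.mono (hh'i.const_mul M) ?_ ?_
    · exact ((Measure.measurable_rnDeriv ν ρ).ennreal_toReal.smul hg).aestronglyMeasurable
    · refine Filter.Eventually.of_forall fun x => ?_
      simp only [smul_eq_mul, norm_mul, Real.norm_eq_abs]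
      rw [abs_of_nonneg hMnn, abs_of_nonneg (ENNReal.toReal_nonneg (a := h' x)),
        abs_of_nonneg (h0 x)]
      calc (h' x).toReal * g x ≤ (h' x).toReal * M :=
            mul_le_mul_of_nonneg_left (h1 x) ENNReal.toReal_nonneg
        _ = M * (h' x).toReal := mul_comm _ _
  have key : ∫ x, g x ∂μ - ∫ x, g x ∂ν
      ≤ M * ((μ A).toReal - (ν A).toReal) := by
    rw [← MeasureTheory.integral_rnDeriv_smul hμρ (f := g), ← MeasureTheory.integral_rnDeriv_smul hνρ (f := g),
      ← integral_sub hgh hgh']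
    have hrhs : M * ((μ A).toReal - (ν A).toReal)
        = ∫ x, A.indicator (fun x => M * ((h x).toReal - (h' x).toReal)) x ∂ρ := by
      rw [integral_indicator hAm]
      rw [integral_const_mul]
      rw [integral_sub hhi.integrableOn hh'i.integrableOn]
      rw [Measure.setIntegral_toReal_rnDeriv hμρ, Measure.setIntegral_toReal_rnDeriv hνρ]
      rfl
    rw [hrhs]
    refine integral_mono_ae (hgh.sub hgh') (((hhi.sub hh'i).const_mul M).indicator hAm) ?_
    filter_upwards [Measure.rnDeriv_lt_top μ ρ, Measure.rnDeriv_lt_top ν ρ] with x hx hx'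
    by_cases hxA : x ∈ A
    · rw [Set.indicator_of_mem hxA]
      have hle : (h' x).toReal ≤ (h x).toReal :=
        (ENNReal.toReal_le_toReal hx'.ne hx.ne).mpr hxA
      simp only [smul_eq_mul]
      nlinarith [h0 x, h1 x]
    · rw [Set.indicator_of_notMem hxA]
      have hlt : h x < h' x := not_le.mp hxA
      have hle : (h x).toReal ≤ (h' x).toReal :=
        (ENNReal.toReal_le_toReal hx.ne hx'.ne).mpr hlt.le
      simp only [smul_eq_mul]
      nlinarith [h0 x, h1 x]
  have hfin : (μ A).toReal - (ν A).toReal ≤ tvDist μ ν :=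
    le_trans (le_abs_self _) (le_ciSup (tvDist_bddAbove μ ν) ⟨A, hAm⟩)
  exact key.trans (mul_le_mul_of_nonneg_left hfin hMnn)

/-- Contraction of total variation under an `α`-differentially private channel:
`TV(M_ν, M_{ν'}) ≤ (e^α - 1) TV(P_ν, P_{ν'})`, where `M` denotes the marginal of the
private data. -/
theorem dp_tv_contraction
    {X Z : Type*} [MeasurableSpace X] [MeasurableSpace Z]
    (Q : X → Measure Z) (hQm : Measurable Q)
    (hQprob : ∀ x, IsProbabilityMeasure (Q x))
    (α : ℝ) (hα : 0 ≤ α)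
    (hDP : ∀ A : Set Z, MeasurableSet A → ∀ x x' : X,
      Q x A ≤ ENNReal.ofReal (Real.exp α) * Q x' A)
    (Pν Pν' : Measure X) [IsProbabilityMeasure Pν] [IsProbabilityMeasure Pν'] :
    tvDist (Pν.bind Q) (Pν'.bind Q) ≤ (Real.exp α - 1) * tvDist Pν Pν' := by
  have hX : Nonempty X := by
    by_contra hX
    rw [not_nonempty_iff] at hX
    have h1 := measure_univ (μ := Pν)
    rw [Set.univ_eq_empty_iff.mpr hX, measure_empty] at h1
    exact zero_ne_one h1
  have hexp1 : (1 : ℝ) ≤ Real.exp α := Real.one_le_exp hα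
  have hMν : IsProbabilityMeasure (Pν.bind Q) := by
    refine ⟨?_⟩
    rw [Measure.bind_apply MeasurableSet.univ hQm.aemeasurable]
    simp [measure_univ]
  have hMν' : IsProbabilityMeasure (Pν'.bind Q) := by
    refine ⟨?_⟩
    rw [Measure.bind_apply MeasurableSet.univ hQm.aemeasurable]
    simp [measure_univ]
  refine ciSup_le ?_
  rintro ⟨A, hA⟩
  set f : X → ℝ := fun x => (Q x A).toReal with hf
  have hfm : Measurable f := ((Measure.measurable_coe hA).comp hQm).ennreal_toReal
  have hf0 : ∀ x, 0 ≤ f x := fun x => ENNReal.toReal_nonneg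
  have hf1 : ∀ x, f x ≤ 1 := by
    intro x
    have h := prob_le_one (μ := Q x) (s := A)
    simpa [hf] using ENNReal.toReal_le_of_le_ofReal zero_le_one (by simpa)
  have hbdd : BddBelow (Set.range f) := ⟨0, by rintro r ⟨x, rfl⟩; exact hf0 x⟩
  set c : ℝ := ⨅ x, f x with hc
  have hc0 : 0 ≤ c := le_ciInf hf0
  have hcle : ∀ x, c ≤ f x := fun x => ciInf_le hbdd x
  have hDPreal : ∀ x x' : X, f x ≤ Real.exp α * f x' := by
    intro x x'
    have h := hDP A hA x x'
    have h2 := ENNReal.toReal_mono (a := Q x A)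
      (b := ENNReal.ofReal (Real.exp α) * Q x' A) ?_ h
    · rwa [ENNReal.toReal_mul, ENNReal.toReal_ofReal (Real.exp_nonneg α)] at h2
    · exact ENNReal.mul_ne_top ENNReal.ofReal_ne_top (measure_ne_top _ _)
  have hub : ∀ x, f x ≤ c + (Real.exp α - 1) := by
    intro x
    have h : f x - (Real.exp α - 1) ≤ c := by
      refine le_ciInf fun x' => ?_
      nlinarith [hDPreal x x', hf1 x', hf0 x']
    linarith
  set g : X → ℝ := fun x => f x - c with hg
  have hgm : Measurable g := hfm.sub measurable_const
  have hg0 : ∀ x, 0 ≤ g x := fun x => by simp [hg]; exact hcle x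
  have hg1 : ∀ x, g x ≤ Real.exp α - 1 := fun x => by
    have := hub x; simp only [hg]; linarith
  have hfint : ∀ (P : Measure X) [IsProbabilityMeasure P], Integrable f P := by
    intro P _
    refine Integrable.mono' (integrable_const 1) hfm.aestronglyMeasurable ?_
    refine Filter.Eventually.of_forall fun x => ?_
    rw [Real.norm_eq_abs, abs_of_nonneg (hf0 x)]
    exact hf1 x
  have hbind : ∀ (P : Measure X) [IsProbabilityMeasure P],
      ((P.bind Q) A).toReal = ∫ x, f x ∂P := by
    intro P _
    have hQAm : Measurable fun x => Q x A := (Measure.measurable_coe hA).comp hQm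
    rw [Measure.bind_apply hA hQm.aemeasurable]
    rw [← integral_toReal hQAm.aemeasurable ?_]
    refine Filter.Eventually.of_forall fun x => ?_
    exact lt_of_le_of_lt (prob_le_one) ENNReal.one_lt_top
  have hgint : ∀ (P : Measure X) [IsProbabilityMeasure P],
      ∫ x, g x ∂P = ∫ x, f x ∂P - c := by
    intro P _
    rw [show g = fun x => f x - c from rfl, integral_sub (hfint P) (integrable_const c)]
    simp [measure_univ]
  have hkey1 := integral_sub_le_tvDist Pν Pν' g hgm (Real.exp α - 1) hg0 hg1
  have hkey2 := integral_sub_le_tvDist Pν' Pν g hgm (Real.exp α - 1) hg0 hg1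
  have htvcomm : tvDist Pν' Pν = tvDist Pν Pν' := by
    unfold tvDist
    congr 1
    funext B
    rw [abs_sub_comm]
  rw [htvcomm] at hkey2
  rw [hbind Pν, hbind Pν', hgint Pν, hgint Pν'] at *
  rw [abs_sub_le_iff]
  constructor <;> linarith
end
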